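/- In a branchwise commutative solid weak BCC-algebra, for x,y in the same branch, A(x) ∩ A(y) = A(x∧y), where A(z) = {w : w ≤ z} and x∧y = y*(y*x). -/
import Mathlib


theorem stmt13 (X : Type*) (m : X → X → X) (e : X)
    (h1 : ∀ x y z : X, m (m (m x y) (m z y)) (m x z) = e)
    (h2 : ∀ x : X, m x x = e)
    (h3 : ∀ x : X, m x e = x)
    (h4 : ∀ x y : X, m x y = e → m y x = e → x = y)
    (hsolid : ∀ x y z : X, m e (m x y) = e → m (m x y) z = m (m x z) y)
    (hcomm : ∀ x y : X, m e (m x y) = e → m x (m x y) = m y (m y x))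
    : ∀ x y : X, m e (m x y) = e →
      {w : X | m w x = e} ∩ {w : X | m w y = e} = {w : X | m w (m y (m y x)) = e} := by
  -- basic facts
  have hee : m e e = e := h3 e
  -- transitivity
  have tr : ∀ a b c : X, m a b = e → m b c = e → m a c = e := by
    intro a b c hab hbc
    have := h1 a c b
    rw [hbc, h3, hab, h3] at this
    exact this
  -- L0 : (x*z)*x = e*z
  have L0 : ∀ x z : X, m (m x z) x = m e z := by
    intro x z
    have h := hsolid x x z (by rw [h2 x, hee])
    rw [h2 x] at h
    exact h.symm
  -- monotonicity: a ≤ b → y*b ≤ y*a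
  have mono : ∀ y a b : X, m a b = e → m (m y b) (m y a) = e := by
    intro y a b hab
    have := h1 y b a  -- ((y*b)*(a*b))*(y*a) = e
    rw [hab, h3] at this
    exact this
  intro x y hbr
  ext w
  simp only [Set.mem_inter_iff, Set.mem_setOf_eq]
  -- d = y*(y*x) = x*(x*y)
  have hc := hcomm x y hbr  -- x*(x*y) = y*(y*x)
  -- d ≤ x
  have hdx : m (m y (m y x)) x = e := by
    rw [← hc, L0 x (m x y)]
    exact hbr
  -- d ≤ y
  have hdy : m (m y (m y x)) y = e := by
    rw [← hc]
    have h := hsolid x y (m x y) hbr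
    rw [h2 (m x y)] at h
    exact h.symm
  constructor
  · rintro ⟨hwx, hwy⟩
    -- w = y*(y*w)
    have hwb : m e (m w y) = e := by rw [hwy, hee]
    have hw : m w (m w y) = m y (m y w) := hcomm w y hwb
    rw [hwy, h3] at hw
    -- y*x ≤ y*w
    have h5 : m (m y x) (m y w) = e := mono y w x hwx
    -- y*(y*w) ≤ y*(y*x)
    have h6 : m (m y (m y w)) (m y (m y x)) = e := mono y (m y x) (m y w) h5
    rw [← hw] at h6
    exact h6
  · intro hwd
    exact ⟨tr _ _ _ hwd hdx, tr _ _ _ hwd hdy⟩
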